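/- Let w* ∈ ℝⁿ be a unit vector, let v ∈ ℝᵐ be nonzero, and define f(w) = (‖v‖²/(2π))·arccos(⟨w, w*⟩/‖w‖) for nonzero w ∈ ℝⁿ. Let Q be either Q₂ = {δ·s : δ ≥ 0, s ∈ {−1,1}ⁿ} or Q₃ = {δ·s : δ ≥ 0, s ∈ {−1,0,1}ⁿ}. If p ∈ Q is nonzero and minimizes the Euclidean distance ‖w* − q‖ over all q ∈ Q, then for every δ > 0 and every nonzero q ∈ Q, f(δ·p) ≤ f(q); that is, every positive multiple of a nearest point to w* in Q is a global minimizer of f over the nonzero elements of Q. -/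

import Mathlib

open Real

/-- Euclidean norm of a vector in `Fin k → ℝ`. -/
noncomputable def euclNorm {k : ℕ} (x : Fin k → ℝ) : ℝ := Real.sqrt (∑ i, x i ^ 2)

lemma euclNorm_nonneg {k : ℕ} (x : Fin k → ℝ) : 0 ≤ euclNorm x := Real.sqrt_nonneg _

lemma euclNorm_sq {k : ℕ} (x : Fin k → ℝ) : euclNorm x ^ 2 = ∑ i, x i ^ 2 := by
  rw [euclNorm, Real.sq_sqrt (Finset.sum_nonneg fun i _ => sq_nonneg _)]

lemma euclNorm_pos {k : ℕ} {x : Fin k → ℝ} (hx : x ≠ 0) : 0 < euclNorm x := by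
  rcases (euclNorm_nonneg x).lt_or_eq with h | h
  · exact h
  · exfalso
    apply hx
    have h2 : ∑ i, x i ^ 2 = 0 := by
      have := euclNorm_sq x
      rw [← h] at this
      simpa using this.symm
    funext i
    have := (Finset.sum_eq_zero_iff_of_nonneg (fun i _ => sq_nonneg (x i))).1 h2 i
      (Finset.mem_univ i)
    simpa using pow_eq_zero_iff (n := 2) (by norm_num) |>.1 this

/-- Expansion of squared distance. -/
lemma dist_sq_expand {k : ℕ} (w x : Fin k → ℝ) :
    (∑ i, (w i - x i) ^ 2) =
      (∑ i, w i ^ 2) - 2 * (∑ i, x i * w i) + ∑ i, x i ^ 2 := by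
  have h : ∀ i, (w i - x i) ^ 2 = w i ^ 2 - 2 * (x i * w i) + x i ^ 2 := fun i => by ring
  simp_rw [h, Finset.sum_add_distrib, Finset.sum_sub_distrib, Finset.mul_sum]

theorem stmt1 (m n : ℕ) (hm : 1 ≤ m) (hn : 1 ≤ n)
    (v : Fin m → ℝ) (hv : v ≠ 0) (wstar : Fin n → ℝ) (hws : euclNorm wstar = 1)
    (f : (Fin n → ℝ) → ℝ)
    (hf : ∀ w : Fin n → ℝ,
      f w = euclNorm v ^ 2 / (2 * π) * Real.arccos ((∑ j, w j * wstar j) / euclNorm w))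
    (Q : Set (Fin n → ℝ))
    (hQ : Q = {x | ∃ δ : ℝ, 0 ≤ δ ∧ ∃ s : Fin n → ℝ,
                (∀ i, s i = 1 ∨ s i = -1) ∧ x = δ • s} ∨
          Q = {x | ∃ δ : ℝ, 0 ≤ δ ∧ ∃ s : Fin n → ℝ,
                (∀ i, s i = -1 ∨ s i = 0 ∨ s i = 1) ∧ x = δ • s})
    (p : Fin n → ℝ) (hpQ : p ∈ Q) (hp0 : p ≠ 0)
    (hpmin : ∀ q ∈ Q, euclNorm (wstar - p) ≤ euclNorm (wstar - q)) :
    ∀ δ : ℝ, 0 < δ → ∀ q ∈ Q, q ≠ 0 → f (δ • p) ≤ f q := by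
  -- inner product notation
  set ip : (Fin n → ℝ) → ℝ := fun x => ∑ j, x j * wstar j with hip
  -- squared norm of wstar is 1
  have hws2 : (∑ i, wstar i ^ 2) = 1 := by
    have := euclNorm_sq wstar
    rw [hws] at this
    linarith
  -- Q is closed under nonnegative scaling
  have hscale : ∀ q ∈ Q, ∀ t : ℝ, 0 ≤ t → t • q ∈ Q := by
    intro q hq t ht
    rcases hQ with h | h <;> rw [h] at hq ⊢ <;>
      obtain ⟨δ, hδ, s, hs, rfl⟩ := hq <;>
      exact ⟨t * δ, mul_nonneg ht hδ, s, hs, by rw [smul_smul]⟩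
  -- 0 ∈ Q
  have h0Q : (0 : Fin n → ℝ) ∈ Q := by
    rcases hQ with h | h <;> rw [h]
    · exact ⟨0, le_refl 0, fun _ => 1, fun i => Or.inl rfl, by simp⟩
    · exact ⟨0, le_refl 0, fun _ => 1, fun i => Or.inr (Or.inr rfl), by simp⟩
  -- squared distance is also minimized at p
  have hpmin2 : ∀ q ∈ Q, (∑ i, (wstar i - p i) ^ 2) ≤ ∑ i, (wstar i - q i) ^ 2 := by
    intro q hq
    have h := hpmin q hq
    have h1 : euclNorm (wstar - p) ^ 2 ≤ euclNorm (wstar - q) ^ 2 :=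
      pow_le_pow_left₀ (euclNorm_nonneg _) h 2
    rw [euclNorm_sq, euclNorm_sq] at h1
    simpa using h1
  have hNp : 0 < euclNorm p := euclNorm_pos hp0
  have hSp : (0:ℝ) < ∑ i, p i ^ 2 := by
    have := euclNorm_sq p; nlinarith
  -- ip p > 0, indeed ip p ≥ (∑ p²)/2
  have hipp : (∑ i, p i ^ 2) / 2 ≤ ip p := by
    have h := hpmin2 0 h0Q
    rw [dist_sq_expand wstar p, hws2] at h
    simp only [Pi.zero_apply, sub_zero] at h
    simp only [hip]
    nlinarith [h]
  have hippos : 0 < ip p := lt_of_lt_of_le (by linarith) hipp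
  -- Key claim: cosine at p dominates cosine at any nonzero q ∈ Q
  have key : ∀ q ∈ Q, q ≠ 0 → ip q / euclNorm q ≤ ip p / euclNorm p := by
    intro q hq hq0
    have hNq : 0 < euclNorm q := euclNorm_pos hq0
    have hSq : (0:ℝ) < ∑ i, q i ^ 2 := by
      have := euclNorm_sq q; nlinarith
    rcases le_or_gt (ip q) 0 with hipq | hipq
    · have h1 : ip q / euclNorm q ≤ 0 := div_nonpos_of_nonpos_of_nonneg hipq hNq.le
      have h2 : 0 < ip p / euclNorm p := div_pos hippos hNp
      linarith
    · -- scale q optimally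
      set t : ℝ := ip q / (∑ i, q i ^ 2) with htdef
      have ht : 0 ≤ t := div_nonneg hipq.le hSq.le
      have hmem := hscale q hq t ht
      have h := hpmin2 (t • q) hmem
      rw [dist_sq_expand wstar p, dist_sq_expand wstar (t • q), hws2] at h
      have e1 : (∑ i, t * q i * wstar i) = t * ip q := by
        simp only [hip, Finset.mul_sum]
        exact Finset.sum_congr rfl fun i _ => by ring
      have e2 : (∑ i, (t * q i) ^ 2) = t ^ 2 * ∑ i, q i ^ 2 := by
        rw [Finset.mul_sum]; exact Finset.sum_congr rfl fun i _ => by ring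
      have h' : 1 - 2 * ip p + (∑ i, p i ^ 2) ≤
          1 - 2 * (t * ip q) + t ^ 2 * (∑ i, q i ^ 2) := by
        simp only [Pi.smul_apply, smul_eq_mul] at h
        rw [e1, e2] at h
        exact h
      -- so ip q ^2 / Sq ≤ ip p ^2 / Sp
      have hsum : ip q ^ 2 / (∑ i, q i ^ 2) ≤ ip p ^ 2 / (∑ i, p i ^ 2) := by
        have hrw : 1 - 2 * (t * ip q) + t ^ 2 * (∑ i, q i ^ 2)
            = 1 - ip q ^ 2 / (∑ i, q i ^ 2) := by
          field_simp [htdef]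
          have hSt : (∑ i, q i ^ 2) * t = ip q := by rw [htdef]; field_simp
          linear_combination ((∑ i, q i ^ 2) * t - ip q) * hSt
        rw [hrw] at h'
        have hb : 2 * ip p - (∑ i, p i ^ 2) ≤ ip p ^ 2 / (∑ i, p i ^ 2) := by
          rw [le_div_iff₀ hSp]
          nlinarith [sq_nonneg (ip p - ∑ i, p i ^ 2)]
        have : ip q ^ 2 / (∑ i, q i ^ 2) ≤ 2 * ip p - (∑ i, p i ^ 2) := by linarith
        linarith
      -- convert to cosines
      have hq2 : ip q ^ 2 / (∑ i, q i ^ 2) = (ip q / euclNorm q) ^ 2 := by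
        rw [div_pow, euclNorm_sq]
      have hp2 : ip p ^ 2 / (∑ i, p i ^ 2) = (ip p / euclNorm p) ^ 2 := by
        rw [div_pow, euclNorm_sq]
      rw [hq2, hp2] at hsum
      have hcq : 0 < ip q / euclNorm q := div_pos hipq hNq
      have hcp : 0 < ip p / euclNorm p := div_pos hippos hNp
      nlinarith
  -- Cauchy-Schwarz lower bound: -1 ≤ cosine
  have cs : ∀ q : Fin n → ℝ, q ≠ 0 → -1 ≤ ip q / euclNorm q := by
    intro q hq0
    have hNq : 0 < euclNorm q := euclNorm_pos hq0
    have h := Finset.sum_mul_sq_le_sq_mul_sq Finset.univ (fun i => q i) (fun i => wstar i)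
    rw [hws2, mul_one] at h
    have h2 : ip q ^ 2 ≤ euclNorm q ^ 2 := by
      rw [euclNorm_sq]; exact h
    have h3 : -(euclNorm q) ≤ ip q := by nlinarith
    rw [neg_le, ← neg_div]
    rw [div_le_one hNq]
    linarith
  -- same for the upper bound (not strictly needed but useful)
  intro δ hδ q hq hq0
  rw [hf, hf]
  have hNp2 : euclNorm (δ • p) = δ * euclNorm p := by
    rw [euclNorm, euclNorm]
    have : (∑ i, (δ • p) i ^ 2) = δ ^ 2 * ∑ i, p i ^ 2 := by
      rw [Finset.mul_sum]
      exact Finset.sum_congr rfl fun i _ => by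
        simp only [Pi.smul_apply, smul_eq_mul, mul_pow]
    rw [this, Real.sqrt_mul (sq_nonneg δ), Real.sqrt_sq hδ.le]
  have hipδ : (∑ j, (δ • p) j * wstar j) = δ * ip p := by
    simp only [hip, Pi.smul_apply, smul_eq_mul, Finset.mul_sum]
    exact Finset.sum_congr rfl fun i _ => by ring
  have hcos : (∑ j, (δ • p) j * wstar j) / euclNorm (δ • p) = ip p / euclNorm p := by
    rw [hipδ, hNp2, mul_div_mul_left _ _ (ne_of_gt hδ)]
  rw [hcos]
  have harccos : Real.arccos (ip p / euclNorm p) ≤ Real.arccos (ip q / euclNorm q) := by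
    rw [Real.arccos, Real.arccos]
    have := Real.monotone_arcsin (key q hq hq0)
    linarith
  have hC : 0 ≤ euclNorm v ^ 2 / (2 * π) :=
    div_nonneg (sq_nonneg _) (by positivity)
  exact mul_le_mul_of_nonneg_left harccos hC
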